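/- arXiv:2604.02653 — 2 statements merged into one kernel-verified Lean document; each statement's English description precedes it below -/
import Mathlib

section
/- Define the binary cross entropy loss with soft label q ∈ [0,1] by BCE_q(z) = −[q·log σ(z) + (1−q)·log(1−σ(z))], where σ(z) = 1/(1+e^{−z}). Then for all z ∈ ℝ, setting s = σ(z), the product-stability satisfies the exact formula α_{BCE_q}(z) = 3(BCE_q'''(z))² − BCE_q''''(z)·BCE_q''(z) = 2·s²·(1−s)²·(3s² − 3s + 1). -/
/-- The sigmoid function `σ(z) = 1/(1 + e^{-z})`. -/
noncomputable def sigmoid (z : ℝ) : ℝ := 1 / (1 + Real.exp (-z))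

/-- Binary cross entropy loss with soft label `q`. -/
noncomputable def BCE (q : ℝ) (z : ℝ) : ℝ :=
  -(q * Real.log (sigmoid z) + (1 - q) * Real.log (1 - sigmoid z))

lemma aux_hasDerivAt (z : ℝ) :
    HasDerivAt (fun z : ℝ => 1 + Real.exp (-z)) (-Real.exp (-z)) z := by
  simpa using (((Real.hasDerivAt_exp (-z)).comp z (hasDerivAt_neg z)).const_add 1)

lemma sigmoid_hasDerivAt (z : ℝ) :
    HasDerivAt sigmoid (sigmoid z * (1 - sigmoid z)) z := by
  have hne : 1 + Real.exp (-z) ≠ 0 := by positivity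
  have h := (aux_hasDerivAt z).inv hne
  have heq : sigmoid = fun z : ℝ => (1 + Real.exp (-z))⁻¹ := by
    funext z; simp [sigmoid, one_div]
  rw [heq]
  refine h.congr_deriv ?_
  beta_reduce
  field_simp
  ring

lemma bce_eq (q : ℝ) : BCE q = fun z => Real.log (1 + Real.exp (-z)) + (1 - q) * z := by
  funext z
  have he : (0:ℝ) < 1 + Real.exp (-z) := by positivity
  have hs_eq : sigmoid z = (1 + Real.exp (-z))⁻¹ := by simp [sigmoid, one_div]
  have h1 : 1 - sigmoid z = Real.exp (-z) / (1 + Real.exp (-z)) := by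
    rw [hs_eq]; field_simp; ring
  rw [BCE, h1, hs_eq, Real.log_inv, Real.log_div (Real.exp_ne_zero _) he.ne', Real.log_exp]
  ring

lemma bce_d1 (q z : ℝ) : HasDerivAt (BCE q) (sigmoid z - q) z := by
  rw [bce_eq]
  have hne : 1 + Real.exp (-z) ≠ 0 := by positivity
  have h := ((aux_hasDerivAt z).log hne).add (((hasDerivAt_id z).const_mul (1 - q)))
  refine h.congr_deriv ?_
  simp only [sigmoid]
  field_simp
  ring

/-- Exact formula for the product-stability of the binary cross entropy
loss: with `s = σ(z)`, `α_{BCE_q}(z) = 2 s² (1−s)² (3s² − 3s + 1)`. -/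
theorem bce_product_stability_formula (q : ℝ) (hq0 : 0 ≤ q) (hq1 : q ≤ 1) (z : ℝ) :
    3 * (iteratedDeriv 3 (BCE q) z) ^ 2 -
        iteratedDeriv 4 (BCE q) z * iteratedDeriv 2 (BCE q) z =
      2 * (sigmoid z) ^ 2 * (1 - sigmoid z) ^ 2 *
        (3 * (sigmoid z) ^ 2 - 3 * sigmoid z + 1) := by
  have E1 : iteratedDeriv 1 (BCE q) = fun z => sigmoid z - q := by
    funext z; rw [iteratedDeriv_one]; exact (bce_d1 q z).deriv
  have E2 : iteratedDeriv 2 (BCE q) = fun z => sigmoid z * (1 - sigmoid z) := by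
    rw [show (2:ℕ) = 1 + 1 from rfl, iteratedDeriv_succ, E1]
    funext z
    exact HasDerivAt.deriv (by simpa using (sigmoid_hasDerivAt z).sub_const q)
  have E3 : iteratedDeriv 3 (BCE q)
      = fun z => sigmoid z * (1 - sigmoid z) * (1 - 2 * sigmoid z) := by
    rw [show (3:ℕ) = 2 + 1 from rfl, iteratedDeriv_succ, E2]
    funext z
    have h := (sigmoid_hasDerivAt z).mul ((sigmoid_hasDerivAt z).const_sub 1)
    apply HasDerivAt.deriv
    refine h.congr_deriv ?_
    ring
  have E4 : iteratedDeriv 4 (BCE q)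
      = fun z => sigmoid z * (1 - sigmoid z) * (1 - 2 * sigmoid z) ^ 2
          - 2 * (sigmoid z * (1 - sigmoid z)) ^ 2 := by
    rw [show (4:ℕ) = 3 + 1 from rfl, iteratedDeriv_succ, E3]
    funext z
    have h := ((sigmoid_hasDerivAt z).mul ((sigmoid_hasDerivAt z).const_sub 1)).mul
      (((sigmoid_hasDerivAt z).const_mul 2).const_sub 1)
    apply HasDerivAt.deriv
    refine h.congr_deriv ?_
    simp only [Pi.mul_apply]
    ring
  rw [E2, E3, E4]
  ring
end

section
/- Let l : ℝ → ℝ be five times continuously differentiable with a local minimum at z* satisfying l''(z*) > 0 and α_l(z*) = 3(l'''(z*))² − l''''(z*)·l''(z*) > 0. Let σ, τ be as guaranteed by the two-step fixed point theorem, and for η ∈ (2/l''(z*), (2+τ)/l''(z*)] let z_η⁺ ∈ (z*, z* + σ) be a two-step fixed point, i.e. D_η(z_η⁺) = l'(z_η⁺) + l'(z_η⁺ − η·l'(z_η⁺)) = 0. Then D_η'(z_η⁺) > 0; in particular z_η⁺ is a strict local minimum of the two-step loss landscape and the fixed point z_η⁺ is the unique zero of D_η in (z*, z* + σ). -/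
open Set

section helpers
variable {l : ℝ → ℝ}

lemma iter_hasDerivAt (hl : ContDiff ℝ 5 l) {k : ℕ} (hk : k + 1 ≤ 5) (x : ℝ) :
    HasDerivAt (iteratedDeriv k l) (iteratedDeriv (k + 1) l x) x := by
  have h1 : ContDiff ℝ 1 (deriv^[k] l) := by
    apply ContDiff.iterate_deriv' 1 k
    apply hl.of_le
    exact_mod_cast Nat.cast_le.mpr (by omega : 1 + k ≤ 5)
  rw [← iteratedDeriv_eq_iterate] at h1
  rw [iteratedDeriv_succ]
  exact ((h1.differentiable one_ne_zero).differentiableAt).hasDerivAt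

lemma iter_continuous (hl : ContDiff ℝ 5 l) {k : ℕ} (hk : k ≤ 5) :
    Continuous (iteratedDeriv k l) := by
  have h1 : ContDiff ℝ 0 (deriv^[k] l) := by
    apply ContDiff.iterate_deriv' 0 k
    apply hl.of_le
    exact_mod_cast Nat.cast_le.mpr (by omega : 0 + k ≤ 5)
  rw [← iteratedDeriv_eq_iterate] at h1
  exact h1.continuous

end helpers

noncomputable def Gf (l : ℝ → ℝ) (η z : ℝ) : ℝ := z - η * iteratedDeriv 1 l z

noncomputable def D0f (l : ℝ → ℝ) (η z : ℝ) : ℝ :=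
  iteratedDeriv 1 l z + iteratedDeriv 1 l (Gf l η z)

noncomputable def D1f (l : ℝ → ℝ) (η z : ℝ) : ℝ :=
  iteratedDeriv 2 l z + iteratedDeriv 2 l (Gf l η z) * (1 - η * iteratedDeriv 2 l z)

noncomputable def D2f (l : ℝ → ℝ) (η z : ℝ) : ℝ :=
  iteratedDeriv 3 l z
    + iteratedDeriv 3 l (Gf l η z) * ((1 - η * iteratedDeriv 2 l z) * (1 - η * iteratedDeriv 2 l z))
    - η * iteratedDeriv 2 l (Gf l η z) * iteratedDeriv 3 l z

noncomputable def D3f (l : ℝ → ℝ) (η z : ℝ) : ℝ :=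
  iteratedDeriv 4 l z
    + iteratedDeriv 4 l (Gf l η z) * ((1 - η * iteratedDeriv 2 l z) * (1 - η * iteratedDeriv 2 l z)
        * (1 - η * iteratedDeriv 2 l z))
    - 3 * η * iteratedDeriv 3 l (Gf l η z) * (1 - η * iteratedDeriv 2 l z) * iteratedDeriv 3 l z
    - η * iteratedDeriv 2 l (Gf l η z) * iteratedDeriv 4 l z

section derivs
variable {l : ℝ → ℝ} (hl : ContDiff ℝ 5 l)

lemma Gf_hasDerivAt (η z : ℝ) :
    ContDiff ℝ 5 l → HasDerivAt (Gf l η) (1 - η * iteratedDeriv 2 l z) z := fun hl => by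
  exact (hasDerivAt_id z).sub ((iter_hasDerivAt hl (by norm_num : 1 + 1 ≤ 5) z).const_mul η)

include hl in
lemma D0f_hasDerivAt (η z : ℝ) : HasDerivAt (D0f l η) (D1f l η z) z := by
  have hG := Gf_hasDerivAt η z hl
  have h1 := iter_hasDerivAt hl (by norm_num : 1 + 1 ≤ 5) z
  have h2 := (iter_hasDerivAt hl (by norm_num : 1 + 1 ≤ 5) (Gf l η z)).comp z hG
  exact h1.add h2

include hl in
lemma D1f_hasDerivAt (η z : ℝ) : HasDerivAt (D1f l η) (D2f l η z) z := by
  have hG := Gf_hasDerivAt η z hl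
  have h2 := iter_hasDerivAt hl (by norm_num : 2 + 1 ≤ 5) z
  have h2G := (iter_hasDerivAt hl (by norm_num : 2 + 1 ≤ 5) (Gf l η z)).comp z hG
  have hA : HasDerivAt (fun z => 1 - η * iteratedDeriv 2 l z) (-(η * iteratedDeriv 3 l z)) z := by
    exact (h2.const_mul η).const_sub 1
  have := h2.add (h2G.mul hA)
  refine this.congr_deriv ?_
  simp only [D2f, Function.comp]
  ring

include hl in
lemma D2f_hasDerivAt (η z : ℝ) : HasDerivAt (D2f l η) (D3f l η z) z := by
  have hG := Gf_hasDerivAt η z hl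
  have h2 := iter_hasDerivAt hl (by norm_num : 2 + 1 ≤ 5) z
  have h3 := iter_hasDerivAt hl (by norm_num : 3 + 1 ≤ 5) z
  have h2G := (iter_hasDerivAt hl (by norm_num : 2 + 1 ≤ 5) (Gf l η z)).comp z hG
  have h3G := (iter_hasDerivAt hl (by norm_num : 3 + 1 ≤ 5) (Gf l η z)).comp z hG
  have hA : HasDerivAt (fun z => 1 - η * iteratedDeriv 2 l z) (-(η * iteratedDeriv 3 l z)) z := by
    exact (h2.const_mul η).const_sub 1
  have hAA := hA.mul hA
  have := (h3.add (h3G.mul hAA)).sub (((h2G.const_mul η).mul h3))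
  refine this.congr_deriv ?_
  simp only [D3f, Function.comp, Pi.mul_apply]
  ring

include hl in
lemma D3f_continuous : Continuous fun p : ℝ × ℝ => D3f l p.1 p.2 := by
  have c1 := iter_continuous hl (by norm_num : 1 ≤ 5)
  have c2 := iter_continuous hl (by norm_num : 2 ≤ 5)
  have c3 := iter_continuous hl (by norm_num : 3 ≤ 5)
  have c4 := iter_continuous hl (by norm_num : 4 ≤ 5)
  have cG : Continuous fun p : ℝ × ℝ => Gf l p.1 p.2 := by
    simp only [Gf]
    exact continuous_snd.sub (continuous_fst.mul (c1.comp continuous_snd))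
  have cA : Continuous fun p : ℝ × ℝ => 1 - p.1 * iteratedDeriv 2 l p.2 :=
    continuous_const.sub (continuous_fst.mul (c2.comp continuous_snd))
  simp only [D3f]
  exact (((c4.comp continuous_snd).add ((c4.comp cG).mul ((cA.mul cA).mul cA))).sub
    (((continuous_const.mul continuous_fst).mul (c3.comp cG)).mul cA |>.mul
      (c3.comp continuous_snd))).sub
    ((continuous_fst.mul (c2.comp cG)).mul (c4.comp continuous_snd))

end derivs


lemma two_step_aux (f f1 f2 f3 : ℝ → ℝ) (zs σ : ℝ)
    (hf : ∀ z, HasDerivAt f (f1 z) z) (hf1 : ∀ z, HasDerivAt f1 (f2 z) z)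
    (hf2 : ∀ z, HasDerivAt f2 (f3 z) z)
    (h0 : f zs = 0) (hneg : f1 zs < 0)
    (h3 : ∀ z ∈ Set.Icc zs (zs + σ), 0 < f3 z)
    (zp : ℝ) (hzp : zp ∈ Set.Ioo zs (zs + σ)) (hfzp : f zp = 0) :
    0 < f1 zp ∧ (∀ z ∈ Set.Ioo zs zp, f z < 0) ∧ (∀ z ∈ Set.Ioo zp (zs + σ), 0 < f z) := by
  obtain ⟨hzp1, hzp2⟩ := hzp
  have cf : Continuous f := continuous_iff_continuousAt.2 fun z => (hf z).continuousAt
  have cf1 : Continuous f1 := continuous_iff_continuousAt.2 fun z => (hf1 z).continuousAt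
  have cf2 : Continuous f2 := continuous_iff_continuousAt.2 fun z => (hf2 z).continuousAt
  -- f2 strictly monotone on the interval
  have mono2 : StrictMonoOn f2 (Icc zs (zs + σ)) := by
    apply strictMonoOn_of_deriv_pos (convex_Icc _ _) cf2.continuousOn
    intro x hx
    rw [interior_Icc] at hx
    rw [(hf2 x).deriv]
    exact h3 x (Ioo_subset_Icc_self hx)
  -- Rolle on [zs, zp]
  obtain ⟨w, hw, hfw⟩ : ∃ w ∈ Ioo zs zp, f1 w = 0 :=
    exists_hasDerivAt_eq_zero hzp1 cf.continuousOn (h0.trans hfzp.symm) fun x _ => hf x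
  obtain ⟨hw1, hw2⟩ := hw
  -- MVT on [zs, w]
  obtain ⟨v, hv, hfv⟩ : ∃ v ∈ Ioo zs w, f2 v = (f1 w - f1 zs) / (w - zs) :=
    exists_hasDerivAt_eq_slope f1 f2 hw1 cf1.continuousOn fun x _ => hf1 x
  obtain ⟨hv1, hv2⟩ := hv
  have hwσ : w < zs + σ := hw2.trans hzp2
  have hvσ : v < zs + σ := hv2.trans hwσ
  have hvmem : v ∈ Icc zs (zs + σ) := ⟨hv1.le, hvσ.le⟩
  have hf2v : 0 < f2 v := by
    rw [hfv, hfw]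
    apply div_pos (by linarith) (by linarith)
  have pos2 : ∀ z ∈ Icc zs (zs + σ), v < z → 0 < f2 z := fun z hz hvz =>
    hf2v.trans (mono2 hvmem hz hvz)
  -- f1 strictly monotone on [v, zs+σ]
  have mono1 : StrictMonoOn f1 (Icc v (zs + σ)) := by
    apply strictMonoOn_of_deriv_pos (convex_Icc _ _) cf1.continuousOn
    intro x hx
    rw [interior_Icc] at hx
    rw [(hf1 x).deriv]
    exact pos2 x ⟨hv1.le.trans hx.1.le, hx.2.le⟩ hx.1
  have hwv : w ∈ Icc v (zs + σ) := ⟨hv2.le, hwσ.le⟩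
  have hf1zp : 0 < f1 zp := by
    have := mono1 hwv ⟨hv2.le.trans hw2.le, hzp2.le⟩ hw2
    rwa [hfw] at this
  -- f1 < 0 on (zs, w)
  have neg1 : ∀ z ∈ Ioo zs w, f1 z < 0 := by
    intro z hz
    rcases lt_or_ge 0 (f2 z) with hc | hc
    · have m : StrictMonoOn f1 (Icc z w) := by
        apply strictMonoOn_of_deriv_pos (convex_Icc _ _) cf1.continuousOn
        intro x hx
        rw [interior_Icc] at hx
        rw [(hf1 x).deriv]
        exact hc.trans (mono2 ⟨hz.1.le, (hz.2.trans hwσ).le⟩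
          ⟨(hz.1.trans hx.1).le, (hx.2.trans hwσ).le⟩ hx.1)
      have := m ⟨le_refl z, hz.2.le⟩ ⟨hz.2.le, le_refl w⟩ hz.2
      rwa [hfw] at this
    · have m : StrictAntiOn f1 (Icc zs z) := by
        apply strictAntiOn_of_deriv_neg (convex_Icc _ _) cf1.continuousOn
        intro x hx
        rw [interior_Icc] at hx
        rw [(hf1 x).deriv]
        exact lt_of_lt_of_le (mono2 ⟨hx.1.le, (hx.2.trans (hz.2.trans hwσ)).le⟩
          ⟨hz.1.le, (hz.2.trans hwσ).le⟩ hx.2) hc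
      have := m ⟨le_refl zs, hz.1.le⟩ ⟨hz.1.le, le_refl z⟩ hz.1
      linarith
  -- f strictly decreasing on [zs, w]
  have antif : StrictAntiOn f (Icc zs w) := by
    apply strictAntiOn_of_deriv_neg (convex_Icc _ _) cf.continuousOn
    intro x hx
    rw [interior_Icc] at hx
    rw [(hf x).deriv]
    exact neg1 x hx
  have fneg1 : ∀ z ∈ Ioc zs w, f z < 0 := by
    intro z hz
    have := antif ⟨le_refl zs, hw1.le⟩ ⟨hz.1.le, hz.2⟩ hz.1
    linarith
  -- f1 > 0 on (w, zs+σ)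
  have pos1 : ∀ z ∈ Ioo w (zs + σ), 0 < f1 z := by
    intro z hz
    have := mono1 hwv ⟨hv2.le.trans hz.1.le, hz.2.le⟩ hz.1
    rwa [hfw] at this
  -- f strictly increasing on [w, zs+σ]
  have monof : StrictMonoOn f (Icc w (zs + σ)) := by
    apply strictMonoOn_of_deriv_pos (convex_Icc _ _) cf.continuousOn
    intro x hx
    rw [interior_Icc] at hx
    rw [(hf x).deriv]
    exact pos1 x hx
  refine ⟨hf1zp, ?_, ?_⟩
  · intro z hz
    rcases le_or_gt z w with hc | hc
    · exact fneg1 z ⟨hz.1, hc⟩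
    · have := monof ⟨hc.le, (hz.2.trans hzp2).le⟩ ⟨hw2.le, hzp2.le⟩ hz.2
      rwa [hfzp] at this
  · intro z hz
    have := monof ⟨hw2.le, hzp2.le⟩ ⟨(hw2.trans hz.1).le, hz.2.le⟩ hz.1
    rwa [hfzp] at this

set_option maxHeartbeats 1000000 in
/-- At a two-step fixed point `z_η⁺ ∈ (z*, z* + σ)` of gradient descent
with learning rate `η ∈ (2/l''(z*), (2+τ)/l''(z*)]`, the derivative of the two-step
displacement `D_η` is strictly positive; in particular `z_η⁺` is a strict local minimum
of any potential for `D_η` (the two-step loss landscape) and is the unique zero of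
`D_η` in `(z*, z* + σ)`. -/
theorem two_step_fixed_point_stability
    (l : ℝ → ℝ) (zs : ℝ)
    (hl : ContDiff ℝ 5 l) (hmin : IsLocalMin l zs)
    (hl2 : 0 < iteratedDeriv 2 l zs)
    (hps : 0 < 3 * (iteratedDeriv 3 l zs) ^ 2 -
        iteratedDeriv 4 l zs * iteratedDeriv 2 l zs)
    (D : ℝ → ℝ → ℝ)
    (hD : ∀ η z : ℝ, D η z = deriv l z + deriv l (z - η * deriv l z)) :
    ∃ σ > (0 : ℝ), ∃ τ > (0 : ℝ),
      ∀ η : ℝ, 2 / iteratedDeriv 2 l zs < η → η ≤ (2 + τ) / iteratedDeriv 2 l zs →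
        ∀ zp : ℝ, zp ∈ Set.Ioo zs (zs + σ) → D η zp = 0 →
          0 < deriv (D η) zp ∧
          (∀ F : ℝ → ℝ, (∀ z : ℝ, HasDerivAt F (D η z) z) →
            ∃ ε > (0 : ℝ), ∀ w : ℝ, w ≠ zp → |w - zp| < ε → F zp < F w) ∧
          (∀ w ∈ Set.Ioo zs (zs + σ), D η w = 0 → w = zp) := by
  have hderiv0 : deriv l zs = 0 := hmin.deriv_eq_zero
  have h1zs : iteratedDeriv 1 l zs = 0 := by rw [iteratedDeriv_one]; exact hderiv0
  have hGzs : ∀ η : ℝ, Gf l η zs = zs := by intro η; simp [Gf, h1zs]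
  have ha : iteratedDeriv 2 l zs ≠ 0 := ne_of_gt hl2
  -- value of the third derivative of the displacement at the critical point
  have hval : D3f l (2 / iteratedDeriv 2 l zs) zs
      = 2 * (3 * (iteratedDeriv 3 l zs) ^ 2 -
          iteratedDeriv 4 l zs * iteratedDeriv 2 l zs) / iteratedDeriv 2 l zs := by
    simp only [D3f, hGzs]
    field_simp
    ring
  have hvalpos : 0 < D3f l (2 / iteratedDeriv 2 l zs) zs := by
    rw [hval]; exact div_pos (by linarith) hl2
  -- openness: third derivative positive on a product neighborhood
  have hopen : IsOpen {p : ℝ × ℝ | 0 < D3f l p.1 p.2} :=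
    isOpen_lt continuous_const (D3f_continuous hl)
  obtain ⟨δ, hδ, hball⟩ := Metric.isOpen_iff.1 hopen (2 / iteratedDeriv 2 l zs, zs) hvalpos
  have hδpos : 0 < δ := hδ
  refine ⟨δ / 2, by positivity, min (iteratedDeriv 2 l zs * δ / 2) 1,
    lt_min (by positivity) one_pos, ?_⟩
  intro η hη1 hη2 zp hzpmem hDzp
  have hη0 : 2 / iteratedDeriv 2 l zs < η := hη1
  have hηδ : |η - 2 / iteratedDeriv 2 l zs| < δ := by
    rw [abs_lt]
    constructor
    · linarith
    · rw [add_div] at hη2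
      have h1 : min (iteratedDeriv 2 l zs * δ / 2) 1 / iteratedDeriv 2 l zs ≤ δ / 2 := by
        rw [div_le_iff₀ hl2]
        nlinarith [min_le_left (iteratedDeriv 2 l zs * δ / 2) (1 : ℝ)]
      linarith
  have h3 : ∀ z ∈ Set.Icc zs (zs + δ / 2), 0 < D3f l η z := by
    intro z hz
    have hmemball : (η, z) ∈ Metric.ball ((2 / iteratedDeriv 2 l zs : ℝ), zs) δ := by
      rw [Metric.mem_ball, Prod.dist_eq]
      apply max_lt
      · rwa [Real.dist_eq]
      · rw [Real.dist_eq, abs_lt]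
        obtain ⟨hz1, hz2⟩ := hz
        constructor <;> linarith
    exact hball hmemball
  have hDfun : D η = D0f l η := by
    funext z; rw [hD]; simp [D0f, Gf, iteratedDeriv_one]
  have hf : ∀ z, HasDerivAt (D η) (D1f l η z) z := by
    intro z; rw [hDfun]; exact D0f_hasDerivAt hl η z
  have h0 : D η zs = 0 := by rw [hD, hderiv0]; simp [hderiv0]
  have hneg : D1f l η zs < 0 := by
    simp only [D1f, hGzs]
    have h2 : 2 < η * iteratedDeriv 2 l zs := (div_lt_iff₀ hl2).1 hη0
    nlinarith
  obtain ⟨hpos1, hfneg, hfpos⟩ :=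
    two_step_aux (D η) (D1f l η) (D2f l η) (D3f l η) zs (δ / 2)
      hf (fun z => D1f_hasDerivAt hl η z) (fun z => D2f_hasDerivAt hl η z)
      h0 hneg h3 zp hzpmem hDzp
  obtain ⟨hzp1, hzp2⟩ := hzpmem
  refine ⟨by rw [(hf zp).deriv]; exact hpos1, ?_, ?_⟩
  · intro F hF
    have cF : Continuous F := continuous_iff_continuousAt.2 fun z => (hF z).continuousAt
    refine ⟨min (zp - zs) (zs + δ / 2 - zp),
      lt_min (by linarith) (by linarith), ?_⟩
    intro w hwne hwd
    rw [abs_lt] at hwd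
    obtain ⟨hwd1, hwd2⟩ := hwd
    have hm1 := min_le_left (zp - zs) (zs + δ / 2 - zp)
    have hm2 := min_le_right (zp - zs) (zs + δ / 2 - zp)
    rcases lt_or_gt_of_ne hwne with hlt | hgt
    · have hws : zs < w := by linarith
      have anti : StrictAntiOn F (Set.Icc w zp) := by
        apply strictAntiOn_of_deriv_neg (convex_Icc _ _) cF.continuousOn
        intro x hx
        rw [interior_Icc] at hx
        rw [(hF x).deriv]
        exact hfneg x ⟨hws.trans hx.1, hx.2⟩
      exact anti ⟨le_refl w, hlt.le⟩ ⟨hlt.le, le_refl zp⟩ hlt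
    · have hwσ : w < zs + δ / 2 := by linarith
      have mono : StrictMonoOn F (Set.Icc zp w) := by
        apply strictMonoOn_of_deriv_pos (convex_Icc _ _) cF.continuousOn
        intro x hx
        rw [interior_Icc] at hx
        rw [(hF x).deriv]
        exact hfpos x ⟨hx.1, hx.2.trans hwσ⟩
      exact mono ⟨le_refl zp, hgt.le⟩ ⟨hgt.le, le_refl w⟩ hgt
  · intro w hw hDw
    rcases lt_trichotomy w zp with h | h | h
    · exact absurd hDw (ne_of_lt (hfneg w ⟨hw.1, h⟩))
    · exact h
    · exact absurd hDw (ne_of_gt (hfpos w ⟨h, hw.2⟩))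
end
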